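/- For integers m, n with 0 < m < n, let S(m,n) = (1/√n) Σ_{l=0}^{n-1} ζ_{2n}^{(n−l)l m} where ζ_{2n} = exp(2πi/(2n)). Then |S(m,n)| = 0 if n is even and both n/gcd(m,n) and m/gcd(m,n) are odd, and |S(m,n)| = √(gcd(m,n)) otherwise. -/

import Mathlib

open Finset Complex

noncomputable def Fq (m n : ℕ) (t : ℤ) : ℂ :=
  Complex.exp (Real.pi * Complex.I * m * t * ((n : ℂ) - t) / n)

lemma expPiI_int (j : ℤ) : Complex.exp (Real.pi * Complex.I * j) = (-1 : ℂ) ^ j := by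
  rw [show (Real.pi : ℂ) * Complex.I * j = j * (Real.pi * Complex.I) by ring,
    Complex.exp_int_mul, Complex.exp_pi_mul_I]

lemma expPiI_even {j : ℤ} (h : Even j) : Complex.exp (Real.pi * Complex.I * j) = 1 := by
  rw [expPiI_int, h.neg_one_zpow]

lemma Fq_congr (m n : ℕ) (hn : 0 < n) {t s : ℤ} (h : t % n = s % n) :
    Fq m n t = Fq m n s := by
  obtain ⟨k, hk⟩ : (n : ℤ) ∣ t - s := Int.ModEq.dvd (Int.ModEq.symm h)
  have ht : t = s + n * k := by linarith [hk]
  subst ht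
  have hn0 : (n : ℂ) ≠ 0 := Nat.cast_ne_zero.mpr hn.ne'
  have key : (Real.pi : ℂ) * Complex.I * m * (s + n * k) * ((n : ℂ) - (s + n * k)) / n
      = Real.pi * Complex.I * m * s * ((n : ℂ) - s) / n
        + Real.pi * Complex.I * ((m * n * (k * (1 - k)) - 2 * m * k * s : ℤ) : ℂ) := by
    push_cast
    field_simp
    ring
  rw [Fq, Fq]
  push_cast
  rw [key, Complex.exp_add, expPiI_even, mul_one]
  have h1 : Even (k * (1 - k)) := by
    have := Int.even_mul_succ_self (-k)
    rcases this with ⟨c, hc⟩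
    exact ⟨-c, by linarith [hc]⟩
  obtain ⟨c, hc⟩ := h1
  exact ⟨(m : ℤ) * n * c - m * k * s, by rw [hc]; ring⟩

lemma sum_zmod (n : ℕ) [NeZero n] (f : ℕ → ℂ) :
    ∑ x : ZMod n, f x.val = ∑ i ∈ Finset.range n, f i := by
  refine Finset.sum_nbij' (fun x => x.val) (fun i => (i : ZMod n)) ?_ ?_ ?_ ?_ ?_
  · intro x _; exact Finset.mem_range.mpr (ZMod.val_lt x)
  · intro i _; exact Finset.mem_univ _
  · intro x _; exact ZMod.natCast_rightInverse x
  · intro i hi; exact ZMod.val_cast_of_lt (Finset.mem_range.mp hi)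
  · intro x _; rfl

lemma sum_char (n : ℕ) [NeZero n] (c : ℤ) :
    ∑ x : ZMod n, Complex.exp (2 * Real.pi * Complex.I * c * x.val / n)
      = if (n : ℤ) ∣ c then (n : ℂ) else 0 := by
  have hn0 : (n : ℂ) ≠ 0 := Nat.cast_ne_zero.mpr (NeZero.ne n)
  set ζ : ℂ := Complex.exp (2 * Real.pi * Complex.I * c / n) with hζ
  have hterm : ∀ a : ℕ, Complex.exp (2 * Real.pi * Complex.I * c * a / n) = ζ ^ a := by
    intro a
    rw [hζ, ← Complex.exp_nat_mul]
    congr 1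
    field_simp
  simp only [hterm]
  rw [sum_zmod n (fun a => ζ ^ a)]
  by_cases hdvd : (n : ℤ) ∣ c
  · obtain ⟨k, hk⟩ := hdvd
    have hζ1 : ζ = 1 := by
      rw [hζ, hk]
      rw [show 2 * (Real.pi : ℂ) * Complex.I * ((n : ℤ) * k : ℤ) / n = (k : ℤ) * (2 * Real.pi * Complex.I) by push_cast; field_simp]
      exact Complex.exp_int_mul_two_pi_mul_I k
    rw [if_pos ⟨k, hk⟩]
    simp [hζ1]
  · rw [if_neg hdvd]
    have hζn : ζ ^ n = 1 := by
      rw [hζ, ← Complex.exp_nat_mul]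
      rw [show (n : ℂ) * (2 * Real.pi * Complex.I * c / n) = (c : ℤ) * (2 * Real.pi * Complex.I) by push_cast; field_simp]
      exact Complex.exp_int_mul_two_pi_mul_I c
    have hζne : ζ ≠ 1 := by
      intro h1
      obtain ⟨k, hk⟩ := Complex.exp_eq_one_iff.mp (hζ ▸ h1)
      apply hdvd
      refine ⟨k, ?_⟩
      have h2πI : (2 : ℂ) * Real.pi * Complex.I ≠ 0 := by
        simp [Real.pi_ne_zero, Complex.I_ne_zero]
      have h4 : (c : ℂ) / n = k := by
        apply mul_left_cancel₀ h2πI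
        rw [show (2*(Real.pi:ℂ)*Complex.I) * ((c:ℂ)/n) = 2*Real.pi*Complex.I*c/n by ring, hk]
        ring
      have h5 : (c : ℂ) = n * k := by
        rw [(div_eq_iff hn0).mp h4]; ring
      exact_mod_cast h5
    rw [geom_sum_eq hζne, hζn]
    simp

lemma Fq_cross (m n : ℕ) (hn : 0 < n) (a b : ℕ) :
    Fq m n ((a : ℤ) + b) * (starRingEnd ℂ) (Fq m n a)
      = Fq m n b * Complex.exp (2 * Real.pi * Complex.I * ((-(m * b * a : ℤ) : ℤ)) / n) := by
  have hn0 : (n : ℂ) ≠ 0 := Nat.cast_ne_zero.mpr hn.ne'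
  unfold Fq
  rw [← Complex.exp_conj, ← Complex.exp_add, ← Complex.exp_add]
  congr 1
  simp only [map_div₀, map_mul, map_sub, Complex.conj_I, Complex.conj_ofReal, map_natCast,
    map_intCast]
  push_cast
  field_simp
  ring

theorem gauss_sum_abs (m n : ℕ) (hm : 0 < m) (hmn : m < n) :
    (1 / Real.sqrt n) *
        ‖(∑ l ∈ Finset.range n,
          Complex.exp (2 * Real.pi * Complex.I * (((n - l) * l * m : ℕ) : ℂ) / (2 * n)))‖ =
      if Even n ∧ Odd (n / Nat.gcd m n) ∧ Odd (m / Nat.gcd m n) then 0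
      else Real.sqrt (Nat.gcd m n) := by
  have hn : 0 < n := hm.trans hmn
  haveI : NeZero n := ⟨hn.ne'⟩
  have hn0 : (n : ℂ) ≠ 0 := Nat.cast_ne_zero.mpr hn.ne'
  set g := Nat.gcd m n with hgdef
  set n' := n / g with hn'def
  set m' := m / g with hm'def
  have hg : 0 < g := Nat.gcd_pos_of_pos_left n hm
  have hgn : g * n' = n := Nat.mul_div_cancel' (Nat.gcd_dvd_right m n)
  have hgm : g * m' = m := Nat.mul_div_cancel' (Nat.gcd_dvd_left m n)
  have hcop : Nat.Coprime m' n' := Nat.coprime_div_gcd_div_gcd hg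
  have hn'pos : 0 < n' := Nat.div_pos (Nat.le_of_dvd hn (Nat.gcd_dvd_right m n)) hg
  set S := ∑ l ∈ Finset.range n,
      Complex.exp (2 * Real.pi * Complex.I * (((n - l) * l * m : ℕ) : ℂ) / (2 * n)) with hSdef
  -- Step 1: rewrite S as sum over ZMod n
  have hS : S = ∑ x : ZMod n, Fq m n x.val := by
    rw [hSdef, sum_zmod n (fun i => Fq m n i)]
    refine Finset.sum_congr rfl fun l hl => ?_
    have hl' : l ≤ n := (Finset.mem_range.mp hl).le
    unfold Fq
    congr 1
    have hc : ((n - l : ℕ) : ℂ) = (n : ℂ) - l := by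
      push_cast [Nat.cast_sub hl']; ring
    push_cast [hc]
    field_simp
  -- Step 2: S * conj S
  have hcross : ∀ d y : ZMod n, Fq m n (y + d).val * (starRingEnd ℂ) (Fq m n y.val)
      = Fq m n d.val * Complex.exp (2 * Real.pi * Complex.I * ((-(m * d.val) : ℤ)) * y.val / n) := by
    intro d y
    have h1 : Fq m n ((y + d).val : ℤ) = Fq m n ((y.val : ℤ) + d.val) := by
      apply Fq_congr m n hn
      rw [ZMod.val_add]
      push_cast
      exact Int.emod_emod_of_dvd _ dvd_rfl
    rw [h1, Fq_cross m n hn y.val d.val]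
    congr 1
    push_cast
    ring
  have key : S * (starRingEnd ℂ) S
      = ∑ d : ZMod n, Fq m n d.val * (if (n : ℤ) ∣ (-(m * d.val) : ℤ) then (n : ℂ) else 0) := by
    rw [hS, map_sum, Finset.sum_mul_sum]
    rw [Finset.sum_comm]
    have h2 : ∀ y : ZMod n, ∑ x : ZMod n, Fq m n x.val * (starRingEnd ℂ) (Fq m n y.val)
        = ∑ d : ZMod n, Fq m n (y + d).val * (starRingEnd ℂ) (Fq m n y.val) := by
      intro y
      exact (Fintype.sum_equiv (Equiv.addLeft y) _ _ (fun d => rfl)).symm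
    rw [Finset.sum_congr rfl fun y _ => h2 y, Finset.sum_comm]
    refine Finset.sum_congr rfl fun d _ => ?_
    rw [Finset.sum_congr rfl fun y _ => hcross d y, ← Finset.mul_sum]
    congr 1
    exact sum_char n (-(m * d.val) : ℤ)
  -- Step 3: divisibility condition
  have hdvd_iff : ∀ a : ℕ, ((n : ℤ) ∣ (-(m * a) : ℤ)) ↔ n' ∣ a := by
    intro a
    rw [dvd_neg]
    rw [show ((m : ℤ) * a) = ((m * a : ℕ) : ℤ) by push_cast; ring, Int.natCast_dvd_natCast]
    constructor
    · intro h
      have h2 : g * n' ∣ g * (m' * a) := by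
        rw [hgn, show g * (m' * a) = m * a by rw [← hgm]; ring]
        exact h
      have h3 : n' ∣ m' * a := (mul_dvd_mul_iff_left hg.ne').mp h2
      exact (Nat.Coprime.dvd_of_dvd_mul_left hcop.symm h3)
    · intro h
      obtain ⟨c, hc⟩ := h
      exact ⟨m' * c, by rw [← hgm, ← hgn, hc]; ring⟩
  have key2 : S * (starRingEnd ℂ) S
      = ∑ k ∈ Finset.range g, Fq m n ((k * n' : ℕ) : ℤ) * n := by
    rw [key]
    have : ∀ d : ZMod n, Fq m n d.val * (if (n : ℤ) ∣ (-(m * d.val) : ℤ) then (n : ℂ) else 0)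
        = if n' ∣ d.val then Fq m n d.val * n else 0 := by
      intro d
      by_cases h : n' ∣ d.val
      · rw [if_pos ((hdvd_iff d.val).mpr h), if_pos h]
      · rw [if_neg (fun hc => h ((hdvd_iff d.val).mp hc)), if_neg h, mul_zero]
    rw [Finset.sum_congr rfl fun d _ => this d, ← Finset.sum_filter]
    refine Finset.sum_nbij' (fun d => d.val / n') (fun k => ((k * n' : ℕ) : ZMod n)) ?_ ?_ ?_ ?_ ?_
    · intro d hd
      obtain ⟨-, hdvd⟩ := Finset.mem_filter.mp hd
      refine Finset.mem_range.mpr ?_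
      rw [Nat.div_lt_iff_lt_mul hn'pos]
      calc d.val < n := ZMod.val_lt d
        _ = g * n' := hgn.symm
    · intro k hk
      refine Finset.mem_filter.mpr ⟨Finset.mem_univ _, ?_⟩
      rw [ZMod.val_cast_of_lt]
      · exact dvd_mul_left n' k
      · calc k * n' < g * n' := (Nat.mul_lt_mul_right hn'pos).mpr (Finset.mem_range.mp hk)
          _ = n := hgn
    · intro d hd
      obtain ⟨-, hdvd⟩ := Finset.mem_filter.mp hd
      show ((d.val / n' * n' : ℕ) : ZMod n) = d
      rw [Nat.div_mul_cancel hdvd]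
      exact ZMod.natCast_rightInverse d
    · intro k hk
      show ((k * n' : ℕ) : ZMod n).val / n' = k
      rw [ZMod.val_cast_of_lt, Nat.mul_div_cancel _ hn'pos]
      calc k * n' < g * n' := (Nat.mul_lt_mul_right hn'pos).mpr (Finset.mem_range.mp hk)
        _ = n := hgn
    · intro d hd
      obtain ⟨-, hdvd⟩ := Finset.mem_filter.mp hd
      show Fq m n (d.val : ℤ) * n = Fq m n ((d.val / n' * n' : ℕ) : ℤ) * n
      rw [Nat.div_mul_cancel hdvd]
  -- Step 4: evaluate Fq at multiples of n'
  have hg0 : (g : ℂ) ≠ 0 := Nat.cast_ne_zero.mpr hg.ne'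
  have hn'0 : (n' : ℂ) ≠ 0 := Nat.cast_ne_zero.mpr hn'pos.ne'
  set e : ℕ → ℤ := fun k => (m' : ℤ) * n' * k * ((g : ℤ) - k) with hedef
  have hval : ∀ k : ℕ, Fq m n ((k * n' : ℕ) : ℤ) = (-1 : ℂ) ^ (e k) := by
    intro k
    rw [← expPiI_int]
    unfold Fq
    congr 1
    have hmc : (m : ℂ) = g * m' := by exact_mod_cast congrArg Nat.cast hgm.symm
    have hnc : (n : ℂ) = g * n' := by exact_mod_cast congrArg Nat.cast hgn.symm
    have hek : ((e k : ℤ) : ℂ) = (m' : ℂ) * n' * k * ((g : ℂ) - k) := by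
      simp only [hedef]
      push_cast
      ring
    rw [hek]
    push_cast
    rw [hmc, hnc]
    field_simp
  -- Step 5: parity sum
  have hsum : ∑ k ∈ Finset.range g, ((-1 : ℂ) ^ (e k))
      = if Odd m' ∧ Odd n' ∧ Even g then 0 else (g : ℂ) := by
    by_cases hpar : Odd m' ∧ Odd n'
    · have hm'e : ¬ Even m' := Nat.not_even_iff_odd.mpr hpar.1
      have hn'e : ¬ Even n' := Nat.not_even_iff_odd.mpr hpar.2
      by_cases hgpar : Even g
      · rw [if_pos ⟨hpar.1, hpar.2, hgpar⟩]
        have hterm : ∀ k ∈ Finset.range g, (-1 : ℂ) ^ (e k) = (-1 : ℂ) ^ k := by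
          intro k _
          have hpar2 : Even (e k) ↔ Even k := by
            simp only [hedef, Int.even_mul, Int.even_sub, Int.even_coe_nat]
            tauto
          rcases Nat.even_or_odd k with hk | hk
          · rw [hk.neg_one_pow, (hpar2.mpr hk).neg_one_zpow]
          · rw [hk.neg_one_pow, Odd.neg_one_zpow]
            rw [← Int.not_even_iff_odd]
            rw [hpar2]
            exact (Nat.not_even_iff_odd).mpr hk
        rw [Finset.sum_congr rfl hterm, neg_one_geom_sum, if_pos hgpar]
      · rw [if_neg (by tauto)]
        have hterm : ∀ k ∈ Finset.range g, (-1 : ℂ) ^ (e k) = 1 := by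
          intro k _
          refine Even.neg_one_zpow ?_
          simp only [hedef, Int.even_mul, Int.even_sub, Int.even_coe_nat]
          rcases Nat.even_or_odd k with hk | hk
          · tauto
          · have hk' : ¬ Even k := Nat.not_even_iff_odd.mpr hk
            tauto
        rw [Finset.sum_congr rfl hterm]
        simp
    · rw [if_neg (by tauto)]
      have hmn'even : Even (m' * n') := by
        rcases Nat.even_or_odd m' with h | h
        · exact h.mul_right n'
        · rcases Nat.even_or_odd n' with h2 | h2
          · exact h2.mul_left m'
          · exact absurd ⟨h, h2⟩ hpar
      have hterm : ∀ k ∈ Finset.range g, (-1 : ℂ) ^ (e k) = 1 := by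
        intro k _
        refine Even.neg_one_zpow ?_
        have h1 : Even (((m' * n' : ℕ)) : ℤ) := by rwa [Int.even_coe_nat]
        have h2 : e k = ((m' * n' : ℕ) : ℤ) * ((k : ℤ) * ((g : ℤ) - k)) := by
          rw [hedef]; push_cast; ring
        rw [h2]
        exact h1.mul_right _
      rw [Finset.sum_congr rfl hterm]
      simp
  -- Step 6: assemble
  have hnormSq : Complex.normSq S = if Odd m' ∧ Odd n' ∧ Even g then 0 else (g * n : ℝ) := by
    have h1 : ((Complex.normSq S : ℝ) : ℂ) = S * (starRingEnd ℂ) S := (Complex.mul_conj S).symm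
    have h2 : S * (starRingEnd ℂ) S
        = ((if Odd m' ∧ Odd n' ∧ Even g then 0 else (g * n : ℝ) : ℝ) : ℂ) := by
      rw [key2, Finset.sum_congr rfl fun k _ => by rw [hval k], ← Finset.sum_mul, hsum]
      split_ifs
      · simp
      · push_cast; ring
    exact_mod_cast h1.trans h2
  have habs : ‖S‖ = Real.sqrt (if Odd m' ∧ Odd n' ∧ Even g then 0 else (g * n : ℝ)) := by
    rw [Complex.norm_def, hnormSq]
  have hcond : (Even n ∧ Odd n' ∧ Odd m') ↔ (Odd m' ∧ Odd n' ∧ Even g) := by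
    constructor
    · rintro ⟨he, ho1, ho2⟩
      refine ⟨ho2, ho1, ?_⟩
      rcases Nat.even_mul.mp (by rw [hgn]; exact he) with h | h
      · exact h
      · exact absurd h (Nat.not_even_iff_odd.mpr ho1)
    · rintro ⟨ho2, ho1, he⟩
      exact ⟨by rw [← hgn]; exact he.mul_right n', ho1, ho2⟩
  rw [habs]
  by_cases hC : Odd m' ∧ Odd n' ∧ Even g
  · rw [if_pos hC, if_pos (hcond.mpr hC)]
    simp
  · rw [if_neg hC, if_neg (fun h => hC (hcond.mp ⟨h.1, h.2.1, h.2.2⟩))]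
    rw [show ((g : ℝ) * n) = (n : ℝ) * g by ring, Real.sqrt_mul (Nat.cast_nonneg n)]
    have hsn : Real.sqrt n ≠ 0 := by
      refine (Real.sqrt_ne_zero').mpr ?_
      exact_mod_cast hn
    field_simp
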